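/- Let T₁, T̃₁, T₂, T, R, R₁, R̃₁, L₁, L̃₁, R₂ be complex numbers with T₁ ≠ 0, T̃₁ ≠ 0, T₂ ≠ 0, T ≠ 0, and suppose: (a) 1/T = (1 − R₂L₁)/(T₂T₁); (b) R/T = R₁/(T₂T₁) + R₂/(T₂T̃₁); (c) L₁T̃₁ + T₁R̃₁ = 0; (d) L₁L̃₁ = R₁R̃₁. Then R̃₁·(1 − R₂L₁)·R = −L₁·(R₂ − L̃₁). In particular, if R̃₁ ≠ 0 and 1 − R₂L₁ ≠ 0, then R = −(L₁/R̃₁)·(R₂ − L̃₁)/(1 − R₂L₁). -/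

import Mathlib

/-- Algebraic content of the recursion for the right reflection coefficient obtained
from potential fragmentation (layer stripping). -/
theorem fragmentation_right_recursion
    (T₁ T₁' T₂ T R R₁ R₁' L₁ L₁' R₂ : ℂ)
    (hT₁ : T₁ ≠ 0) (hT₁' : T₁' ≠ 0) (hT₂ : T₂ ≠ 0) (hT : T ≠ 0)
    (ha : 1 / T = (1 - R₂ * L₁) / (T₂ * T₁))
    (hb : R / T = R₁ / (T₂ * T₁) + R₂ / (T₂ * T₁'))
    (hc : L₁ * T₁' + T₁ * R₁' = 0)
    (hd : L₁ * L₁' = R₁ * R₁') :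
    R₁' * (1 - R₂ * L₁) * R = -L₁ * (R₂ - L₁') ∧
    (R₁' ≠ 0 → 1 - R₂ * L₁ ≠ 0 →
      R = -(L₁ / R₁') * ((R₂ - L₁') / (1 - R₂ * L₁))) := by
  field_simp at ha hb
  have hb' : R * (T₂ * T₁ * T₁') = (R₁ * T₁' + R₂ * T₁) * T :=
    mul_left_cancel₀ hT₂ (by linear_combination T₂ * hb)
  have h3 : (1 - R₂ * L₁) * R * T₁' = R₁ * T₁' + R₂ * T₁ := by
    apply mul_right_cancel₀ hT
    linear_combination -R * T₁' * ha + hb'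
  have key : R₁' * (1 - R₂ * L₁) * R = -L₁ * (R₂ - L₁') := by
    apply mul_right_cancel₀ hT₁'
    linear_combination R₁' * h3 + R₂ * hc - T₁' * hd
  refine ⟨key, fun hR hD => ?_⟩
  have hD' : 1 - L₁ * R₂ ≠ 0 := by rwa [mul_comm]
  field_simp
  linear_combination key
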